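/- For the cycle C_n on n ≥ 3 vertices, L□_V(C_n)=2n−1. -/

import Mathlib

open SimpleGraph

/-- An `l`-track on `G`: a surjective function whose consecutive values are adjacent. -/
def IsTrack {V : Type*} (G : SimpleGraph V) {l : ℕ} (f : Fin l → V) : Prop :=
  Function.Surjective f ∧
    ∀ i : ℕ, ∀ hi : i + 1 < l, G.Adj (f ⟨i, Nat.lt_of_succ_lt hi⟩) (f ⟨i + 1, hi⟩)

/-- A lazy `l`-track on `G`: consecutive values are adjacent or equal. -/
def IsLazyTrack {V : Type*} (G : SimpleGraph V) {l : ℕ} (f : Fin l → V) : Prop :=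
  Function.Surjective f ∧
    ∀ i : ℕ, ∀ hi : i + 1 < l,
      G.Adj (f ⟨i, Nat.lt_of_succ_lt hi⟩) (f ⟨i + 1, hi⟩) ∨
        f ⟨i, Nat.lt_of_succ_lt hi⟩ = f ⟨i + 1, hi⟩

/-- The condition that every edge of `G` is traversed by `f`. -/
def SweepCond {V : Type*} (G : SimpleGraph V) {l : ℕ} (f : Fin l → V) : Prop :=
  ∀ e ∈ G.edgeSet, ∃ i : ℕ, ∃ hi : i + 1 < l,
    e = s(f ⟨i, Nat.lt_of_succ_lt hi⟩, f ⟨i + 1, hi⟩)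

/-- An `l`-sweep on `G`: an `l`-track traversing every edge. -/
def IsSweep {V : Type*} (G : SimpleGraph V) {l : ℕ} (f : Fin l → V) : Prop :=
  IsTrack G f ∧ SweepCond G f

/-- A lazy `l`-sweep on `G`: a lazy `l`-track traversing every edge. -/
def IsLazySweep {V : Type*} (G : SimpleGraph V) {l : ℕ} (f : Fin l → V) : Prop :=
  IsLazyTrack G f ∧ SweepCond G f

/-- `f` and `g` are opposite: at each step exactly `f` moves iff `g` stays. -/
def IsOpposite {V : Type*} (G : SimpleGraph V) {l : ℕ} (f g : Fin l → V) : Prop :=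
  ∀ i : ℕ, ∀ hi : i + 1 < l,
    (G.Adj (f ⟨i, Nat.lt_of_succ_lt hi⟩) (f ⟨i + 1, hi⟩) ↔
      g ⟨i, Nat.lt_of_succ_lt hi⟩ = g ⟨i + 1, hi⟩)

/-- The distance `m_G(f,g)`: minimal distance between simultaneous positions. -/
noncomputable def mDist {V : Type*} (G : SimpleGraph V) {l : ℕ} (f g : Fin l → V) : ℕ :=
  sInf {d | ∃ i : Fin l, G.dist (f i) (g i) = d}

/-- Strong vertex span `σ⊠_V(G)`. -/
noncomputable def strongVertexSpan {V : Type*} (G : SimpleGraph V) : ℕ :=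
  sSup {d | ∃ (l : ℕ) (f g : Fin l → V), IsLazyTrack G f ∧ IsLazyTrack G g ∧ mDist G f g = d}

/-- Direct vertex span `σ×_V(G)`. -/
noncomputable def directVertexSpan {V : Type*} (G : SimpleGraph V) : ℕ :=
  sSup {d | ∃ (l : ℕ) (f g : Fin l → V), IsTrack G f ∧ IsTrack G g ∧ mDist G f g = d}

/-- Cartesian vertex span `σ□_V(G)`. -/
noncomputable def cartesianVertexSpan {V : Type*} (G : SimpleGraph V) : ℕ :=
  sSup {d | ∃ (l : ℕ) (f g : Fin l → V),
    IsLazyTrack G f ∧ IsLazyTrack G g ∧ IsOpposite G f g ∧ mDist G f g = d}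

/-- Strong edge span `σ⊠_E(G)`. -/
noncomputable def strongEdgeSpan {V : Type*} (G : SimpleGraph V) : ℕ :=
  sSup {d | ∃ (l : ℕ) (f g : Fin l → V), IsLazySweep G f ∧ IsLazySweep G g ∧ mDist G f g = d}

/-- Direct edge span `σ×_E(G)`. -/
noncomputable def directEdgeSpan {V : Type*} (G : SimpleGraph V) : ℕ :=
  sSup {d | ∃ (l : ℕ) (f g : Fin l → V), IsSweep G f ∧ IsSweep G g ∧ mDist G f g = d}

/-- Cartesian edge span `σ□_E(G)`. -/
noncomputable def cartesianEdgeSpan {V : Type*} (G : SimpleGraph V) : ℕ :=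
  sSup {d | ∃ (l : ℕ) (f g : Fin l → V),
    IsLazySweep G f ∧ IsLazySweep G g ∧ IsOpposite G f g ∧ mDist G f g = d}

/-- `L⊠_V(G)`: minimal length of lazy tracks realizing the strong vertex span. -/
noncomputable def strongVertexL {V : Type*} (G : SimpleGraph V) : ℕ :=
  sInf {l | ∃ f g : Fin l → V,
    IsLazyTrack G f ∧ IsLazyTrack G g ∧ mDist G f g = strongVertexSpan G}

/-- `L×_V(G)`. -/
noncomputable def directVertexL {V : Type*} (G : SimpleGraph V) : ℕ :=
  sInf {l | ∃ f g : Fin l → V,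
    IsTrack G f ∧ IsTrack G g ∧ mDist G f g = directVertexSpan G}

/-- `L□_V(G)`. -/
noncomputable def cartesianVertexL {V : Type*} (G : SimpleGraph V) : ℕ :=
  sInf {l | ∃ f g : Fin l → V,
    IsLazyTrack G f ∧ IsLazyTrack G g ∧ IsOpposite G f g ∧ mDist G f g = cartesianVertexSpan G}

/-- `L⊠_E(G)`. -/
noncomputable def strongEdgeL {V : Type*} (G : SimpleGraph V) : ℕ :=
  sInf {l | ∃ f g : Fin l → V,
    IsLazySweep G f ∧ IsLazySweep G g ∧ mDist G f g = strongEdgeSpan G}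

/-- `L×_E(G)`. -/
noncomputable def directEdgeL {V : Type*} (G : SimpleGraph V) : ℕ :=
  sInf {l | ∃ f g : Fin l → V,
    IsSweep G f ∧ IsSweep G g ∧ mDist G f g = directEdgeSpan G}

/-- `L□_E(G)`. -/
noncomputable def cartesianEdgeL {V : Type*} (G : SimpleGraph V) : ℕ :=
  sInf {l | ∃ f g : Fin l → V,
    IsLazySweep G f ∧ IsLazySweep G g ∧ IsOpposite G f g ∧ mDist G f g = cartesianEdgeSpan G}


namespace Span16

open Fin.NatCast Fin.CommRing

lemma natstep {n a b : ℕ} (h2 : 2 ≤ n) (ha : a < n) (hb : b < n)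
    (h : a = (b+1) % n ∨ b = (a+1) % n) :
    min a (n-a) ≤ min b (n-b) + 1 ∧ min (min a (n-a)) (min b (n-b)) ≤ (n-1)/2 := by
  have hmod : ∀ c : ℕ, c < n → ((c+1) % n = c+1 ∨ (c+1 = n ∧ (c+1) % n = 0)) := by
    intro c hc
    rcases Nat.lt_or_ge (c+1) n with h1 | h1
    · exact Or.inl (Nat.mod_eq_of_lt h1)
    · right; have : c + 1 = n := by omega
      simp [this]
  rcases h with h | h
  · rcases hmod b hb with h1 | ⟨h1, h2'⟩ <;> omega
  · rcases hmod a ha with h1 | ⟨h1, h2'⟩ <;> omega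

variable {n : ℕ} [NeZero n]

lemma val_one' (hn : 2 ≤ n) : (1 : Fin n).val = 1 := by
  rw [← Nat.cast_one, Fin.val_natCast]
  exact Nat.mod_eq_of_lt (by omega)

lemma val_add_one (hn : 2 ≤ n) (x : Fin n) : (x + 1).val = (x.val + 1) % n := by
  rw [Fin.val_add, val_one' hn]

lemma eq_one_of_val (hn : 2 ≤ n) {x : Fin n} (h : x.val = 1) : x = 1 :=
  Fin.ext (by rw [h, val_one' hn])

lemma cycle_connected (hn : 3 ≤ n) : (cycleGraph n).Connected :=
  Connected.mk cycleGraph_preconnected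

lemma adj_succ (hn : 3 ≤ n) (x : Fin n) : (cycleGraph n).Adj x (x + 1) := by
  rw [cycleGraph_adj']
  right
  rw [add_sub_cancel_left, val_one' (by omega)]

lemma dist_le_shift (hn : 3 ≤ n) : ∀ (k : ℕ) (u : Fin n),
    (cycleGraph n).dist u (u + (k : Fin n)) ≤ k := by
  intro k
  induction k with
  | zero => intro u; simp
  | succ k ih =>
    intro u
    have h1 : u + ((k+1 : ℕ) : Fin n) = (u + 1) + (k : Fin n) := by push_cast; ring
    rw [h1]
    calc (cycleGraph n).dist u ((u+1) + (k : Fin n))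
        ≤ (cycleGraph n).dist u (u+1) + (cycleGraph n).dist (u+1) ((u+1) + (k : Fin n)) :=
          (cycle_connected hn).dist_triangle
      _ ≤ 1 + k := by
          have h2 := (dist_eq_one_iff_adj).mpr (adj_succ hn u)
          have h3 := ih (u+1)
          omega
      _ = k + 1 := by omega

lemma walk_ge (hn : 3 ≤ n) : ∀ {u v : Fin n} (p : (cycleGraph n).Walk u v),
    min (v-u).val (n - (v-u).val) ≤ p.length := by
  intro u v p
  induction p with
  | nil => rw [sub_self]; simp
  | @cons u w v h q ih =>
    rw [Walk.length_cons]
    rw [cycleGraph_adj'] at h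
    have hrel : (v-u).val = ((v-w).val + 1) % n ∨ (v-w).val = ((v-u).val + 1) % n := by
      rcases h with h | h
      · have hu : u = 1 + w := by
          rw [← eq_one_of_val (by omega) h]; ring
        right
        have h4 : v - w = (v - u) + 1 := by rw [hu]; ring
        rw [h4, val_add_one (by omega)]
      · have hw : w = 1 + u := by
          rw [← eq_one_of_val (by omega) h]; ring
        left
        have h4 : v - u = (v - w) + 1 := by rw [hw]; ring
        rw [h4, val_add_one (by omega)]
    have := (natstep (by omega) (Fin.is_lt _) (Fin.is_lt _) hrel).1
    omega

lemma dist_cycle (hn : 3 ≤ n) (u v : Fin n) :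
    (cycleGraph n).dist u v = min (v-u).val (n - (v-u).val) := by
  apply le_antisymm
  · rcases eq_or_ne v u with rfl | hne
    · rw [sub_self]; simp
    · have hsub : v - u ≠ 0 := sub_ne_zero.mpr hne
      have h1 : (cycleGraph n).dist u v ≤ (v-u).val := by
        have h := dist_le_shift hn (v-u).val u
        rwa [Fin.cast_val_eq_self, add_sub_cancel] at h
      have h2 : (cycleGraph n).dist u v ≤ n - (v-u).val := by
        have h := dist_le_shift hn (u-v).val v
        rw [Fin.cast_val_eq_self, add_sub_cancel, dist_comm] at h
        have hval : (u - v).val = n - (v-u).val := by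
          have h5 : u - v = -(v - u) := by ring
          rw [h5, Fin.neg_def]
          have h0 : (v-u).val ≠ 0 := fun hc => hsub (Fin.ext hc)
          have h6 := Fin.is_lt (v-u)
          exact Nat.mod_eq_of_lt (by omega)
        rwa [hval] at h
      exact le_min h1 h2
  · obtain ⟨p, hp⟩ := (cycle_connected hn).exists_walk_length_eq_dist u v
    have := walk_ge hn p
    omega


lemma construction (hn : 3 ≤ n) :
    ∃ f g : Fin (2*n-1) → Fin n,
      IsLazyTrack (cycleGraph n) f ∧ IsLazyTrack (cycleGraph n) g ∧
      IsOpposite (cycleGraph n) f g ∧ mDist (cycleGraph n) f g = (n-1)/2 := by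
  have hn2 : 2 ≤ n := by omega
  set c : Fin n := ((n/2 : ℕ) : Fin n) with hc
  set f : Fin (2*n-1) → Fin n := fun i => -(((i.val+1)/2 : ℕ) : Fin n) with hfdef
  set g : Fin (2*n-1) → Fin n := fun i => c - ((i.val/2 : ℕ) : Fin n) with hgdef
  have fval : ∀ (j : ℕ) (h : j < 2*n-1), f ⟨j, h⟩ = -(((j+1)/2 : ℕ) : Fin n) := fun j h => rfl
  have gval : ∀ (j : ℕ) (h : j < 2*n-1), g ⟨j, h⟩ = c - ((j/2 : ℕ) : Fin n) := fun j h => rfl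
  -- step analysis
  have heven : ∀ (i : ℕ) (hi : i + 1 < 2*n-1), i % 2 = 0 →
      (cycleGraph n).Adj (f ⟨i, Nat.lt_of_succ_lt hi⟩) (f ⟨i+1, hi⟩) ∧
      g ⟨i, Nat.lt_of_succ_lt hi⟩ = g ⟨i+1, hi⟩ := by
    intro i hi hpar
    rw [fval, fval, gval, gval]
    have h1 : (i+1)/2 = i/2 := by omega
    have h2 : (i+1+1)/2 = i/2 + 1 := by omega
    rw [h1, h2]
    constructor
    · rw [cycleGraph_adj']
      left
      have h3 : -((i/2 : ℕ) : Fin n) - -(((i/2 + 1 : ℕ) : Fin n)) = 1 := by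
        push_cast
        ring
      rw [h3, val_one' hn2]
    · rfl
  have hodd : ∀ (i : ℕ) (hi : i + 1 < 2*n-1), i % 2 = 1 →
      f ⟨i, Nat.lt_of_succ_lt hi⟩ = f ⟨i+1, hi⟩ ∧
      g ⟨i, Nat.lt_of_succ_lt hi⟩ ≠ g ⟨i+1, hi⟩ := by
    intro i hi hpar
    rw [fval, fval, gval, gval]
    have h1 : (i+1)/2 = i/2 + 1 := by omega
    have h2 : (i+1+1)/2 = i/2 + 1 := by omega
    rw [h1, h2]
    refine ⟨rfl, ?_⟩
    intro hcon
    have h3 : ((i/2 : ℕ) : Fin n) = ((i/2 + 1 : ℕ) : Fin n) := by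
      exact sub_right_inj.mp hcon
    have h4 := congrArg Fin.val h3
    rw [Fin.val_natCast, Fin.val_natCast] at h4
    have h5 : i/2 < n - 1 := by omega
    rw [Nat.mod_eq_of_lt (by omega), Nat.mod_eq_of_lt (by omega)] at h4
    omega
  have hfsurj : Function.Surjective f := by
    intro v
    refine ⟨⟨2 * (-v).val, by have := (-v).isLt; omega⟩, ?_⟩
    rw [fval]
    have h1 : (2 * (-v).val + 1)/2 = (-v).val := by omega
    rw [h1, Fin.cast_val_eq_self, neg_neg]
  have hgsurj : Function.Surjective g := by
    intro v
    refine ⟨⟨2 * (c - v).val, by have := (c - v).isLt; omega⟩, ?_⟩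
    rw [gval]
    have h1 : (2 * (c - v).val)/2 = (c - v).val := by omega
    rw [h1, Fin.cast_val_eq_self, sub_sub_cancel]
  refine ⟨f, g, ⟨hfsurj, ?_⟩, ⟨hgsurj, ?_⟩, ?_, ?_⟩
  · intro i hi
    rcases Nat.even_or_odd i with hp | hp
    · exact Or.inl (heven i hi (Nat.even_iff.mp hp)).1
    · exact Or.inr (hodd i hi (Nat.odd_iff.mp hp)).1
  · intro i hi
    rcases Nat.even_or_odd i with hp | hp
    · exact Or.inr (heven i hi (Nat.even_iff.mp hp)).2
    · left
      have h1 := (hodd i hi (Nat.odd_iff.mp hp)).2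
      have h2 := (hodd i hi (Nat.odd_iff.mp hp)).1
      have hpar := Nat.odd_iff.mp hp
      -- g moves by -1 at odd steps: show adjacency
      rw [gval, gval] at h1 ⊢
      have h3 : (i+1)/2 = i/2 + 1 := by omega
      rw [h3]
      rw [cycleGraph_adj']
      left
      have h4 : c - ((i/2 : ℕ) : Fin n) - (c - ((i/2 + 1 : ℕ) : Fin n)) = 1 := by
        push_cast
        ring
      rw [h4, val_one' hn2]
  · intro i hi
    rcases Nat.even_or_odd i with hp | hp
    · exact iff_of_true (heven i hi (Nat.even_iff.mp hp)).1 (heven i hi (Nat.even_iff.mp hp)).2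
    · refine iff_of_false ?_ (hodd i hi (Nat.odd_iff.mp hp)).2
      rw [(hodd i hi (Nat.odd_iff.mp hp)).1]
      exact (cycleGraph n).irrefl
  · -- mDist computation
    have hd : ∀ i : Fin (2*n-1), (cycleGraph n).dist (f i) (g i) =
        min (n/2 + i.val % 2) (n - (n/2 + i.val % 2)) := by
      intro i
      rw [dist_cycle hn]
      have hgf : g i - f i = ((n/2 + i.val % 2 : ℕ) : Fin n) := by
        show c - ((i.val/2 : ℕ) : Fin n) - (-(((i.val+1)/2 : ℕ) : Fin n)) = _
        have h2 : (i.val+1)/2 = i.val/2 + i.val % 2 := by omega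
        rw [h2, hc]
        push_cast
        ring
      rw [hgf, Fin.val_natCast, Nat.mod_eq_of_lt (by omega)]
    unfold mDist
    apply le_antisymm
    · apply Nat.sInf_le
      refine ⟨⟨1, by omega⟩, ?_⟩
      rw [hd]
      have h1 : ((⟨1, by omega⟩ : Fin (2*n-1)) : ℕ) = 1 := rfl
      rw [h1]
      omega
    · apply le_csInf
      · exact ⟨_, ⟨1, by omega⟩, rfl⟩
      · rintro d ⟨i, rfl⟩
        rw [hd]
        omega

lemma span_le (hn : 3 ≤ n) {l : ℕ} {f g : Fin l → Fin n}
    (hf : IsLazyTrack (cycleGraph n) f) (hg : IsLazyTrack (cycleGraph n) g)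
    (hop : IsOpposite (cycleGraph n) f g) :
    mDist (cycleGraph n) f g ≤ (n-1)/2 := by
  have hl : 0 < l := by
    obtain ⟨i0, -⟩ := hf.1 ⟨0, by omega⟩
    exact i0.pos
  have hex : ∃ j : ℕ, ∃ hj : j + 1 < l, f ⟨j, Nat.lt_of_succ_lt hj⟩ ≠ f ⟨j+1, hj⟩ := by
    by_contra hcon
    push_neg at hcon
    have hconst : ∀ (i : ℕ) (h : i < l), f ⟨i, h⟩ = f ⟨0, hl⟩ := by
      intro i
      induction i with
      | zero => intro h; rfl
      | succ k ih =>
        intro h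
        rw [← hcon k h]
        exact ih (by omega)
    obtain ⟨a, ha⟩ := hf.1 (f ⟨0, hl⟩ + 1)
    have h2 : f a = f ⟨0, hl⟩ := by
      have h3 := hconst a.val a.isLt
      rwa [Fin.eta] at h3
    rw [ha] at h2
    have h3 : (1 : Fin n) = 0 := add_eq_left.mp h2
    have h4 := congrArg Fin.val h3
    rw [val_one' (by omega), Fin.val_zero] at h4
    omega
  obtain ⟨j, hj, hne⟩ := hex
  have hadj : (cycleGraph n).Adj (f ⟨j, Nat.lt_of_succ_lt hj⟩) (f ⟨j+1, hj⟩) :=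
    (hf.2 j hj).resolve_right hne
  have hgeq : g ⟨j, Nat.lt_of_succ_lt hj⟩ = g ⟨j+1, hj⟩ := (hop j hj).mp hadj
  have hd1 : mDist (cycleGraph n) f g ≤
      (cycleGraph n).dist (f ⟨j, Nat.lt_of_succ_lt hj⟩) (g ⟨j, Nat.lt_of_succ_lt hj⟩) :=
    Nat.sInf_le ⟨⟨j, Nat.lt_of_succ_lt hj⟩, rfl⟩
  have hd2 : mDist (cycleGraph n) f g ≤ (cycleGraph n).dist (f ⟨j+1, hj⟩) (g ⟨j+1, hj⟩) :=
    Nat.sInf_le ⟨⟨j+1, hj⟩, rfl⟩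
  rw [← hgeq] at hd2
  rw [dist_cycle hn] at hd1 hd2
  set u := f ⟨j, Nat.lt_of_succ_lt hj⟩ with hu
  set u' := f ⟨j+1, hj⟩ with hu'
  set w := g ⟨j, Nat.lt_of_succ_lt hj⟩ with hw
  rw [cycleGraph_adj'] at hadj
  have hrel : (w - u).val = ((w - u').val + 1) % n ∨ (w - u').val = ((w - u).val + 1) % n := by
    rcases hadj with h | h
    · have h1 : u = 1 + u' := by rw [← eq_one_of_val (by omega) h]; ring
      right
      have h2 : w - u' = (w - u) + 1 := by rw [h1]; ring
      rw [h2, val_add_one (by omega)]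
    · have h1 : u' = 1 + u := by rw [← eq_one_of_val (by omega) h]; ring
      left
      have h2 : w - u = (w - u') + 1 := by rw [h1]; ring
      rw [h2, val_add_one (by omega)]
  have := (natstep (by omega) (Fin.is_lt (w - u)) (Fin.is_lt (w - u')) hrel).2
  omega

lemma span_eq (hn : 3 ≤ n) : cartesianVertexSpan (cycleGraph n) = (n-1)/2 := by
  obtain ⟨f, g, hf, hg, ho, hm⟩ := construction hn
  apply le_antisymm
  · apply csSup_le
    · exact ⟨(n-1)/2, 2*n-1, f, g, hf, hg, ho, hm⟩
    · rintro d ⟨l, f', g', hf', hg', ho', rfl⟩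
      exact span_le hn hf' hg' ho'
  · refine le_csSup ⟨(n-1)/2, ?_⟩ ⟨2*n-1, f, g, hf, hg, ho, hm⟩
    rintro d ⟨l, f', g', hf', hg', ho', rfl⟩
    exact span_le hn hf' hg' ho'

lemma moves_count {V : Type*} [DecidableEq V] (F : ℕ → V) : ∀ k : ℕ,
    ((Finset.range (k+1)).image F).card ≤
      1 + ((Finset.range k).filter (fun i => F i ≠ F (i+1))).card := by
  intro k
  induction k with
  | zero => simp
  | succ k ih =>
    rw [Finset.range_add_one, Finset.image_insert]
    conv_rhs => rw [Finset.range_add_one]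
    rw [Finset.filter_insert]
    by_cases h : F k = F (k+1)
    · rw [if_neg (by simp [h])]
      have hmem : F (k+1) ∈ (Finset.range (k+1)).image F := by
        rw [← h]
        exact Finset.mem_image_of_mem F (Finset.self_mem_range_succ k)
      rw [Finset.insert_eq_self.mpr hmem]
      exact ih
    · rw [if_pos (by simp [h])]
      have hk : k ∉ (Finset.range k).filter (fun i => F i ≠ F (i+1)) := by
        simp
      rw [Finset.card_insert_of_notMem hk]
      have := Finset.card_insert_le (F (k+1)) ((Finset.range (k+1)).image F)
      omega

lemma two_surj_count {V : Type*} [DecidableEq V] (F G : ℕ → V) (k m : ℕ)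
    (hop : ∀ i < k, F i ≠ F (i+1) → G i = G (i+1))
    (hF : m ≤ ((Finset.range (k+1)).image F).card)
    (hG : m ≤ ((Finset.range (k+1)).image G).card) :
    2*m ≤ k + 2 := by
  have h1 := moves_count F k
  have h2 := moves_count G k
  have hdisj : Disjoint ((Finset.range k).filter (fun i => F i ≠ F (i+1)))
      ((Finset.range k).filter (fun i => G i ≠ G (i+1))) := by
    rw [Finset.disjoint_left]
    intro i hiA hiB
    rw [Finset.mem_filter, Finset.mem_range] at hiA hiB
    exact hiB.2 (hop i hiA.1 hiA.2)
  have hcard := Finset.card_union_of_disjoint hdisj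
  have hsubr : ((Finset.range k).filter (fun i => F i ≠ F (i+1)) ∪
      (Finset.range k).filter (fun i => G i ≠ G (i+1))) ⊆ Finset.range k :=
    Finset.union_subset (Finset.filter_subset _ _) (Finset.filter_subset _ _)
  have hle := Finset.card_le_card hsubr
  rw [Finset.card_range] at hle
  omega

set_option maxHeartbeats 1000000 in
lemma length_ge (hn : 3 ≤ n) {l : ℕ} {f g : Fin l → Fin n}
    (hf : IsLazyTrack (cycleGraph n) f) (hg : IsLazyTrack (cycleGraph n) g)
    (hop : IsOpposite (cycleGraph n) f g) :
    2*n - 1 ≤ l := by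
  have hl : 0 < l := by
    obtain ⟨i0, -⟩ := hf.1 ⟨0, by omega⟩
    exact i0.pos
  have main : ∀ (h : Fin l → Fin n), Function.Surjective h →
      (n : ℕ) ≤ ((Finset.range ((l-1)+1)).image (fun i => h ⟨min i (l-1), by omega⟩)).card := by
    intro h hsurj
    have h1 : (Finset.univ : Finset (Fin n)) ⊆
        (Finset.range ((l-1)+1)).image (fun i => h ⟨min i (l-1), by omega⟩) := by
      intro v _
      obtain ⟨i, hi⟩ := hsurj v
      refine Finset.mem_image.mpr ⟨i.val, Finset.mem_range.mpr (by have := i.isLt; omega), ?_⟩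
      rw [← hi]
      congr 1
      exact Fin.ext (show min i.val (l-1) = i.val by have := i.isLt; omega)
    calc (n : ℕ) = (Finset.univ : Finset (Fin n)).card := by simp
      _ ≤ _ := Finset.card_le_card h1
  have key := two_surj_count (fun i => f ⟨min i (l-1), by omega⟩)
      (fun i => g ⟨min i (l-1), by omega⟩) (l-1) n ?_ (main f hf.1) (main g hg.1)
  · omega
  · intro i hi hFne
    beta_reduce at hFne ⊢
    have hi1 : i + 1 < l := by omega
    have e1 : (⟨min i (l-1), by omega⟩ : Fin l) = ⟨i, Nat.lt_of_succ_lt hi1⟩ :=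
      Fin.ext (show min i (l-1) = i by omega)
    have e2 : (⟨min (i+1) (l-1), by omega⟩ : Fin l) = ⟨i+1, hi1⟩ :=
      Fin.ext (show min (i+1) (l-1) = i+1 by omega)
    rw [e1, e2] at hFne ⊢
    have hadj := (hf.2 i hi1).resolve_right hFne
    exact (hop i hi1).mp hadj

end Span16

theorem stmt16 (n : ℕ) (hn : 3 ≤ n) :
    cartesianVertexL (SimpleGraph.cycleGraph n) = 2 * n - 1 := by
  haveI : NeZero n := ⟨by omega⟩
  have hspan := Span16.span_eq (n := n) hn
  obtain ⟨f, g, hf, hg, ho, hm⟩ := Span16.construction (n := n) hn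
  have hmem : (2*n-1) ∈ {l | ∃ f g : Fin l → Fin n,
      IsLazyTrack (cycleGraph n) f ∧ IsLazyTrack (cycleGraph n) g ∧
      IsOpposite (cycleGraph n) f g ∧
      mDist (cycleGraph n) f g = cartesianVertexSpan (cycleGraph n)} :=
    ⟨f, g, hf, hg, ho, by rw [hspan]; exact hm⟩
  unfold cartesianVertexL
  apply le_antisymm
  · exact Nat.sInf_le hmem
  · have hmem2 := Nat.sInf_mem ⟨2*n-1, hmem⟩
    obtain ⟨f', g', hf', hg', ho', -⟩ := hmem2
    exact Span16.length_ge hn hf' hg' ho'
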